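/- Let (a, b, c) be a Markov triple of positive integers with a ≤ b ≤ c and c > 2. Then ab < c - 1. -/

import Mathlib

/-- For any Markov triple `(a, b, c)` with `a ≤ b ≤ c` and `c > 2`, one has `ab < c - 1`. -/
theorem markov_ab_lt_c_sub_one (a b c : ℤ) (ha : 0 < a) (hb : 0 < b) (hc : 0 < c)
    (hab : a ≤ b) (hbc : b ≤ c) (hc2 : 2 < c)
    (h : a ^ 2 + b ^ 2 + c ^ 2 = 3 * a * b * c) :
    a * b < c - 1 := by
  have hcd : c * (3 * a * b - c) = a ^ 2 + b ^ 2 := by ring_nf; linarith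
  have hdpos : 0 < 3 * a * b - c := by nlinarith
  rcases eq_or_lt_of_le (show (0:ℤ) + 1 ≤ a from ha) with ha1 | ha2
  · -- a = 1
    rcases eq_or_lt_of_le hbc with hcb | hcb
    · exfalso; nlinarith
    rcases eq_or_lt_of_le (by linarith : b + 1 ≤ c) with hcb1 | hcb1
    · exfalso; nlinarith
    · nlinarith
  · -- a ≥ 2
    have hd2b : 3 * a * b - c ≤ 2 * b := by nlinarith
    nlinarith
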